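/- Let Λ be a nondegenerate quadratic lattice and Λ' a full sublattice of Λ (i.e., of finite index). Then for every natural number N there exists a natural number N' such that every isometry of Λ'_ℚ preserving Λ' and congruent to the identity modulo N'Λ' also preserves Λ and is congruent to the identity modulo NΛ. -/

import Mathlib

/-- If `Λ'` is a full (finite-index) sublattice of a nondegenerate quadratic lattice `Λ`,
then for every level `N` there is a level `N'` such that every isometry of `Λ'_ℚ = Λ_ℚ`
preserving `Λ'` and congruent to the identity modulo `N'Λ'` also preserves `Λ` and is
congruent to the identity modulo `NΛ`. -/

theorem aux_scale {V : Type*} [AddCommGroup V] [Module ℚ V]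
    (Λ' : Submodule ℤ V) (hfull' : Submodule.span ℚ (Λ' : Set V) = ⊤) (x : V) :
    ∃ n : ℕ, 0 < n ∧ (n : ℤ) • x ∈ Λ' := by
  have hx : x ∈ Submodule.span ℚ (Λ' : Set V) := by rw [hfull']; trivial
  induction hx using Submodule.span_induction with
  | mem z hz => exact ⟨1, one_pos, by simpa using hz⟩
  | zero => exact ⟨1, one_pos, by simp⟩
  | add a b _ _ ha hb =>
    obtain ⟨n, hn, hna⟩ := ha
    obtain ⟨k, hk, hkb⟩ := hb
    refine ⟨n * k, Nat.mul_pos hn hk, ?_⟩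
    have : ((n * k : ℕ) : ℤ) • (a + b) = (k : ℤ) • ((n:ℤ) • a) + (n : ℤ) • ((k:ℤ) • b) := by
      push_cast
      rw [smul_add, ← mul_smul, ← mul_smul, mul_comm]
    rw [this]
    exact Submodule.add_mem _ (Submodule.smul_mem _ _ hna) (Submodule.smul_mem _ _ hkb)
  | smul q a _ ha =>
    obtain ⟨n, hn, hna⟩ := ha
    refine ⟨n * q.den, Nat.mul_pos hn q.pos, ?_⟩
    have key : ((n * q.den : ℕ) : ℤ) • (q • a) = q.num • ((n : ℤ) • a) := by
      rw [← mul_smul]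
      have h1 : ∀ (m : ℤ) (v : V), m • v = (m : ℚ) • v := fun m v =>
        (Int.cast_smul_eq_zsmul ℚ m v).symm
      rw [h1, h1, ← mul_smul]
      congr 1
      push_cast
      rw [mul_comm (q.num : ℚ)]
      ring_nf
      rw [mul_assoc, Rat.den_mul_eq_num]
    rw [key]
    exact Submodule.smul_mem _ _ hna

theorem stmt_1 {V : Type*} [AddCommGroup V] [Module ℚ V] [FiniteDimensional ℚ V]
    (B : LinearMap.BilinForm ℚ V) (hsymm : ∀ x y, B x y = B y x)
    (hnd : ∀ x, (∀ y, B x y = 0) → x = 0)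
    (Λ Λ' : Submodule ℤ V) (hfg : Λ.FG)
    (hfull : Submodule.span ℚ (Λ : Set V) = ⊤)
    (hint : ∀ x ∈ Λ, ∀ y ∈ Λ, ∃ n : ℤ, B x y = (n : ℚ))
    (hsub : Λ' ≤ Λ) (hfull' : Submodule.span ℚ (Λ' : Set V) = ⊤)
    (N : ℕ) (hN : 0 < N) :
    ∃ N' : ℕ, 0 < N' ∧ ∀ g : V ≃ₗ[ℚ] V,
      (∀ x y, B (g x) (g y) = B x y) →
      (∀ x ∈ Λ', g x ∈ Λ') →
      (∀ x ∈ Λ', ∃ y ∈ Λ', g x - x = (N' : ℤ) • y) →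
      (∀ x ∈ Λ, g x ∈ Λ) ∧ (∀ x ∈ Λ, ∃ y ∈ Λ, g x - x = (N : ℤ) • y) := by
  classical
  obtain ⟨s, hs⟩ := hfg
  -- choose for each generator a positive scaling into Λ'
  choose f hf hfm using fun x : V => aux_scale Λ' hfull' x
  set m : ℕ := ∏ x ∈ s, f x with hm
  have hmpos : 0 < m := Finset.prod_pos fun x _ => hf x
  -- mΛ ⊆ Λ'
  have hmΛ : ∀ x ∈ Λ, (m : ℤ) • x ∈ Λ' := by
    have hle : Λ ≤ Submodule.comap ((m : ℤ) • (LinearMap.id : V →ₗ[ℤ] V)) Λ' := by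
      rw [← hs, Submodule.span_le]
      intro x hx
      simp only [SetLike.mem_coe, Submodule.mem_comap, LinearMap.smul_apply, LinearMap.id_apply]
      obtain ⟨c, hc⟩ := Finset.dvd_prod_of_mem f hx
      rw [hm, hc]
      push_cast
      rw [mul_comm, mul_smul]
      exact Submodule.smul_mem _ _ (hfm x)
    intro x hx
    simpa using hle hx
  refine ⟨m * N, Nat.mul_pos hmpos hN, fun g _ _ hcong => ?_⟩
  have key : ∀ x ∈ Λ, ∃ y ∈ Λ', g x - x = (N : ℤ) • y := by
    intro x hx
    obtain ⟨y, hy, hxy⟩ := hcong ((m : ℤ) • x) (hmΛ x hx)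
    refine ⟨y, hy, ?_⟩
    have hg : g ((m : ℤ) • x) = (m : ℤ) • g x := map_zsmul g _ _
    have h2 : (m : ℤ) • (g x - x) = (m : ℤ) • ((N : ℤ) • y) := by
      rw [smul_sub, ← hg, hxy, ← mul_smul]
      push_cast
      ring_nf
    have hcast : ∀ v : V, (m : ℤ) • v = (m : ℚ) • v := fun v =>
      (Int.cast_smul_eq_zsmul ℚ (m : ℤ) v).symm
    rw [hcast, hcast] at h2
    have := smul_right_injective V (r := (m : ℚ))
      (by exact_mod_cast hmpos.ne') h2
    exact this
  constructor
  · intro x hx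
    obtain ⟨y, hy, hxy⟩ := key x hx
    have : g x = x + (N : ℤ) • y := by rw [← hxy]; abel
    rw [this]
    exact Submodule.add_mem _ hx (Submodule.smul_mem _ _ (hsub hy))
  · intro x hx
    obtain ⟨y, hy, hxy⟩ := key x hx
    exact ⟨y, hsub hy, hxy⟩
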